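/- For each k ∈ {0,1,…,N}, the vector v^k = (cos(k·x_0), cos(k·x_1), …, cos(k·x_N)) ∈ ℝ^{N+1} is an eigenvector of the matrix A_{α,h}: A_{α,h}·v^k = λ_k·v^k, where λ_k = −(σ/cos(απ/2))·(2/h)^α·(sin(kπh/2))^α·cos( kπh + (α/2)(π − kπh) ). -/

import Mathlib

/-- The Grünwald--Letnikov coefficients `g_k(α) = (-1)^k C(α,k)`, where
`C(α,k) = α(α-1)⋯(α-k+1)/k!` is the generalized binomial coefficient. -/
noncomputable def glCoeff (α : ℝ) (k : ℕ) : ℝ :=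
  (-1 : ℝ) ^ k * ((∏ i ∈ Finset.range k, (α - i)) / (Nat.factorial k))

/-- The Neumann extension `v̂ : ℤ → ℝ` of a vector `v = (v_0, …, v_N) ∈ ℝ^{N+1}`:
`v̂_j = v_j` for `0 ≤ j ≤ N`, `v̂_{-1-j} = v̂_j`, and `v̂_{j+2(N+1)} = v̂_j`. -/
def neumannExt (N : ℕ) (v : Fin (N + 1) → ℝ) (j : ℤ) : ℝ :=
  if h : (j % (2 * (N + 1))).toNat ≤ N then
    v ⟨(j % (2 * (N + 1))).toNat, Nat.lt_succ_of_le h⟩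
  else
    v ⟨2 * N + 1 - (j % (2 * (N + 1))).toNat, by
      have h2 : j % (2 * (N + 1)) < 2 * (N + 1) := Int.emod_lt_of_pos j (by positivity)
      omega⟩

/-- The mesh size `h = 1/(N+1)`. -/
noncomputable def gridH (N : ℕ) : ℝ := 1 / ((N : ℝ) + 1)

/-- The grid points `x_j = π h (j + 1/2)`, `h = 1/(N+1)`. -/
noncomputable def gridX (N : ℕ) (j : ℕ) : ℝ := Real.pi * gridH N * ((j : ℝ) + 1 / 2)

/-- The action of the Grünwald--Letnikov discretization matrix `A_{α,h}` (with `h = 1/(N+1)`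
and `C_σ = -σ/(2 cos(απ/2))`) on a vector `v ∈ ℝ^{N+1}` via the Neumann extension:
`[A_{α,h} v]_j = (C_σ/h^α) Σ_{k=0}^∞ g_k(α) (v̂_{j+1-k} + v̂_{j-1+k})`. -/
noncomputable def Amul (α σ : ℝ) (N : ℕ) (v : Fin (N + 1) → ℝ) (j : Fin (N + 1)) : ℝ :=
  (-σ / (2 * Real.cos (α * Real.pi / 2)) / gridH N ^ α) *
    ∑' k : ℕ, glCoeff α k *
      (neumannExt N v ((j : ℤ) + 1 - (k : ℤ)) + neumannExt N v ((j : ℤ) - 1 + (k : ℤ)))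

/-- The matrix `A_{α,h} ∈ ℝ^{(N+1)×(N+1)}`, whose `m`-th column is the action of the
discretized operator on the `m`-th standard basis vector. -/
noncomputable def Amat (α σ : ℝ) (N : ℕ) : Matrix (Fin (N + 1)) (Fin (N + 1)) ℝ :=
  Matrix.of fun j m => Amul α σ N (fun i => if i = m then 1 else 0) j

/-- The eigenvalues `λ_k = -(σ/cos(απ/2)) (2/h)^α (sin(kπh/2))^α cos(kπh + (α/2)(π - kπh))`. -/
noncomputable def eigVal (α σ : ℝ) (N : ℕ) (k : ℕ) : ℝ :=
  -(σ / Real.cos (α * Real.pi / 2)) * (2 / gridH N) ^ α *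
    Real.sin ((k : ℝ) * Real.pi * gridH N / 2) ^ α *
    Real.cos ((k : ℝ) * Real.pi * gridH N + α / 2 * (Real.pi - (k : ℝ) * Real.pi * gridH N))

open Finset Filter Topology

section AuxLemmas


lemma glCoeff_zero (α : ℝ) : glCoeff α 0 = 1 := by simp [glCoeff]

lemma glCoeff_one (α : ℝ) : glCoeff α 1 = -α := by simp [glCoeff]

lemma glCoeff_succ (α : ℝ) (n : ℕ) :
    glCoeff α (n + 1) = glCoeff α n * ((n - α) / (n + 1)) := by
  unfold glCoeff
  rw [Finset.prod_range_succ, Nat.factorial_succ, pow_succ]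
  have h1 : ((n : ℝ) + 1) ≠ 0 := by positivity
  have h2 : ((n.factorial : ℝ)) ≠ 0 := by positivity
  push_cast
  field_simp
  ring

lemma glCoeff_succ_eq (α : ℝ) (M : ℕ) :
    glCoeff α (M + 1) = glCoeff (α - 1) M * (-α / (M + 1)) := by
  unfold glCoeff
  rw [Finset.prod_range_succ', Nat.factorial_succ, pow_succ]
  have h1 : ((M : ℝ) + 1) ≠ 0 := by positivity
  have h2 : ((M.factorial : ℝ)) ≠ 0 := by positivity
  have h3 : ∀ i ∈ Finset.range M, (α - ((i : ℕ) + 1 : ℕ)) = (α - 1 - i) := by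
    intro i _; push_cast; ring
  rw [Finset.prod_congr rfl h3]
  push_cast
  field_simp
  ring

lemma sum_range_glCoeff (α : ℝ) (M : ℕ) :
    ∑ n ∈ Finset.range (M + 1), glCoeff α n = glCoeff (α - 1) M := by
  induction M with
  | zero => simp [glCoeff]
  | succ M ih =>
      rw [Finset.sum_range_succ, ih, glCoeff_succ_eq, glCoeff_succ]
      have h1 : ((M : ℝ) + 1) ≠ 0 := by positivity
      field_simp
      ring

variable {α : ℝ}

lemma abs_glCoeff_sub_one_le (hα1 : 1 < α) (hα2 : α ≤ 2) :
    ∀ M : ℕ, 1 ≤ M → |glCoeff (α - 1) M| ≤ (α - 1) / M := by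
  intro M hM
  induction M, hM using Nat.le_induction with
  | base =>
      rw [glCoeff_one, abs_neg, abs_of_nonneg (by linarith)]
      norm_num
  | succ M hM ih =>
      have hM1 : (1 : ℝ) ≤ (M : ℝ) := by exact_mod_cast hM
      rw [glCoeff_succ, abs_mul, abs_div,
        abs_of_nonneg (show (0:ℝ) ≤ (M:ℝ) - (α-1) by linarith),
        abs_of_pos (show (0:ℝ) < (M:ℝ)+1 by linarith)]
      push_cast
      have key : ((M:ℝ) - (α-1)) / ((M:ℝ)+1) ≤ (M:ℝ)/((M:ℝ)+1) := by
        gcongr; linarith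
      calc |glCoeff (α-1) M| * (((M:ℝ) - (α-1)) / ((M:ℝ)+1))
          ≤ ((α-1)/M) * ((M:ℝ)/((M:ℝ)+1)) :=
            mul_le_mul ih key (div_nonneg (by linarith) (by linarith))
              (div_nonneg (by linarith) (by linarith))
        _ = (α-1)/((M:ℝ)+1) := by
            field_simp

lemma glCoeff_nonneg (hα1 : 1 < α) (hα2 : α ≤ 2) :
    ∀ n : ℕ, 2 ≤ n → 0 ≤ glCoeff α n := by
  intro n hn
  induction n, hn using Nat.le_induction with
  | base =>
      have h : glCoeff α 2 = α * (α - 1) / 2 := by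
        unfold glCoeff
        rw [Finset.prod_range_succ, Finset.prod_range_succ]
        norm_num
      rw [h]
      exact div_nonneg (mul_nonneg (by linarith) (by linarith)) (by norm_num)
  | succ n hn ih =>
      rw [glCoeff_succ]
      have h2 : (2 : ℝ) ≤ (n : ℝ) := by exact_mod_cast hn
      exact mul_nonneg ih (div_nonneg (by linarith) (by linarith))

lemma tendsto_sum_glCoeff (hα1 : 1 < α) (hα2 : α ≤ 2) :
    Tendsto (fun M => ∑ n ∈ Finset.range M, glCoeff α n) atTop (𝓝 0) := by
  rw [← tendsto_add_atTop_iff_nat 1]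
  simp only [sum_range_glCoeff]
  apply squeeze_zero_norm' (a := fun M : ℕ => (α - 1) / M)
  · filter_upwards [eventually_ge_atTop 1] with M hM
    exact abs_glCoeff_sub_one_le hα1 hα2 M hM
  · exact tendsto_const_div_atTop_nhds_zero_nat _

lemma summable_glCoeff (hα1 : 1 < α) (hα2 : α ≤ 2) : Summable (glCoeff α) := by
  rw [← summable_nat_add_iff 2]
  apply summable_of_sum_range_le (c := 2 * α)
    (fun n => glCoeff_nonneg hα1 hα2 _ (by omega))
  intro M
  have key : ∑ n ∈ Finset.range (M + 2), glCoeff α n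
      = (∑ n ∈ Finset.range M, glCoeff α (n + 2)) + glCoeff α 1 + glCoeff α 0 := by
    rw [Finset.sum_range_succ' (fun n => glCoeff α n) (M+1),
      Finset.sum_range_succ' (fun n => glCoeff α (n+1)) M]
  have h2 : ∑ n ∈ Finset.range (M + 2), glCoeff α n = glCoeff (α - 1) (M + 1) := by
    have := sum_range_glCoeff α (M + 1)
    simpa using this
  have h3 : |glCoeff (α - 1) (M + 1)| ≤ (α - 1) / ((M:ℝ) + 1) := by
    have := abs_glCoeff_sub_one_le hα1 hα2 (M + 1) (by omega)
    push_cast at this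
    exact this
  have h4 : (α - 1) / ((M : ℝ) + 1) ≤ α - 1 := by
    apply div_le_self (by linarith)
    have : (0:ℝ) ≤ (M:ℝ) := Nat.cast_nonneg M
    linarith
  have h5 : glCoeff (α - 1) (M + 1) ≤ α - 1 := le_trans (le_trans (le_abs_self _) h3) h4
  rw [glCoeff_zero, glCoeff_one] at key
  have h6 : ∑ n ∈ Finset.range M, glCoeff α (n + 2)
      = glCoeff (α - 1) (M + 1) + α - 1 := by rw [← h2, key]; ring
  rw [h6]; linarith

lemma hasSum_glCoeff_zero (hα1 : 1 < α) (hα2 : α ≤ 2) : HasSum (glCoeff α) 0 := by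
  have hs := (summable_glCoeff hα1 hα2).hasSum
  have h1 := hs.tendsto_sum_nat
  have h0 := tendsto_sum_glCoeff hα1 hα2
  rwa [tendsto_nhds_unique h1 h0] at hs

lemma abs_glCoeff_le_two (hα1 : 1 < α) (hα2 : α ≤ 2) (n : ℕ) : |glCoeff α n| ≤ 2 := by
  induction n with
  | zero => simp [glCoeff_zero]
  | succ n ih =>
      match n, ih with
      | 0, _ => rw [glCoeff_one, abs_neg, abs_of_pos (by linarith)]; linarith
      | (m+1), ih =>
          rw [glCoeff_succ, abs_mul, abs_div]
          have hm0 : (0:ℝ) ≤ (m:ℝ) := Nat.cast_nonneg m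
          have hq : |((m+1:ℕ):ℝ) - α| / |((m+1:ℕ):ℝ) + 1| ≤ 1 := by
            apply div_le_one_of_le₀ ?_ (abs_nonneg _)
            push_cast
            rw [abs_of_pos (show (0:ℝ) < (m:ℝ)+1+1 by positivity), abs_le]
            constructor <;> linarith
          have := mul_le_mul ih hq (div_nonneg (abs_nonneg _) (abs_nonneg _)) (by norm_num)
          linarith

lemma summable_abs_glCoeff (hα1 : 1 < α) (hα2 : α ≤ 2) :
    Summable (fun n => |glCoeff α n|) := by
  rw [← summable_nat_add_iff 2]
  have he : (fun n => |glCoeff α (n + 2)|) = fun n => glCoeff α (n + 2) :=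
    funext fun n => abs_of_nonneg (glCoeff_nonneg hα1 hα2 _ (by omega))
  rw [he]
  exact (summable_nat_add_iff 2).2 (summable_glCoeff hα1 hα2)

lemma summable_glC_mul_pow (hα1 : 1 < α) (hα2 : α ≤ 2) {z : ℂ} (hz : ‖z‖ ≤ 1) :
    Summable (fun n => (glCoeff α n : ℂ) * z ^ n) := by
  apply Summable.of_norm_bounded (summable_abs_glCoeff hα1 hα2)
  intro n
  rw [norm_mul, norm_pow, Complex.norm_real, Real.norm_eq_abs]
  calc |glCoeff α n| * ‖z‖ ^ n ≤ |glCoeff α n| * 1 ^ n := by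
        gcongr
    _ = |glCoeff α n| := by simp

lemma summable_mul_geom {r : ℝ} (hr0 : 0 ≤ r) (hr : r < 1) :
    Summable (fun n : ℕ => 2 * ((n : ℝ) * r ^ (n - 1))) := by
  apply Summable.mul_left
  rw [← summable_nat_add_iff 1]
  simp only [Nat.add_sub_cancel]
  have h1 : Summable (fun n : ℕ => (n : ℝ) * r ^ n) := by
    simpa using summable_pow_mul_geometric_of_norm_lt_one 1
      (r := r) (by rwa [Real.norm_eq_abs, abs_of_nonneg hr0])
  have h2 : Summable (fun n : ℕ => r ^ n) := summable_geometric_of_lt_one hr0 hr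
  apply (h1.add h2).congr
  intro n
  push_cast
  ring

lemma summable_D (hα1 : 1 < α) (hα2 : α ≤ 2) {z : ℂ} (hz : ‖z‖ < 1) :
    Summable (fun n => (glCoeff α n : ℂ) * ((n : ℂ) * z ^ (n - 1))) := by
  apply Summable.of_norm_bounded (summable_mul_geom (norm_nonneg z) hz)
  intro n
  rw [norm_mul, norm_mul, norm_pow, Complex.norm_real, Real.norm_eq_abs,
    Complex.norm_natCast]
  have hX : (0:ℝ) ≤ (n : ℝ) * ‖z‖ ^ (n - 1) := by positivity
  exact mul_le_mul_of_nonneg_right (abs_glCoeff_le_two hα1 hα2 n) hX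

lemma summable_D' (hα1 : 1 < α) (hα2 : α ≤ 2) {z : ℂ} (hz : ‖z‖ < 1) :
    Summable (fun n => (glCoeff α n : ℂ) * ((n : ℂ) * z ^ n)) := by
  have h1 : Summable (fun n : ℕ => 2 * ((n : ℝ) * ‖z‖ ^ n)) := by
    apply Summable.mul_left
    simpa using summable_pow_mul_geometric_of_norm_lt_one 1
      (r := ‖z‖) (by rwa [Real.norm_eq_abs, abs_of_nonneg (norm_nonneg z)])
  apply Summable.of_norm_bounded h1
  intro n
  rw [norm_mul, norm_mul, norm_pow, Complex.norm_real, Real.norm_eq_abs,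
    Complex.norm_natCast]
  have hX : (0:ℝ) ≤ (n : ℝ) * ‖z‖ ^ n := by positivity
  exact mul_le_mul_of_nonneg_right (abs_glCoeff_le_two hα1 hα2 n) hX

lemma glCoeff_mul_succ (α : ℝ) (n : ℕ) :
    glCoeff α (n + 1) * ((n : ℝ) + 1) = glCoeff α n * ((n : ℝ) - α) := by
  rw [glCoeff_succ]
  have : ((n : ℝ) + 1) ≠ 0 := by positivity
  field_simp

lemma glCoeff_mul_succ_C (α : ℝ) (n : ℕ) :
    (glCoeff α (n + 1) : ℂ) * ((n + 1 : ℕ) : ℂ) = (glCoeff α n : ℂ) * ((n : ℂ) - α) := by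
  push_cast
  exact_mod_cast glCoeff_mul_succ α n

lemma hasDerivAt_glC_tsum (hα1 : 1 < α) (hα2 : α ≤ 2) {w : ℂ} (hw : ‖w‖ < 1) :
    HasDerivAt (fun z : ℂ => ∑' n : ℕ, (glCoeff α n : ℂ) * z ^ n)
      (∑' n : ℕ, (glCoeff α n : ℂ) * ((n : ℂ) * w ^ (n - 1))) w := by
  set r : ℝ := (1 + ‖w‖) / 2 with hr
  have hr0 : 0 ≤ r := by positivity
  have hr1 : r < 1 := by rw [hr]; linarith
  have hwr : ‖w‖ < r := by rw [hr]; linarith [norm_nonneg w]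
  refine hasDerivAt_tsum_of_isPreconnected (summable_mul_geom hr0 hr1)
    Metric.isOpen_ball (convex_ball (0:ℂ) r).isPreconnected
    (g' := fun n y => (glCoeff α n : ℂ) * ((n : ℂ) * y ^ (n - 1)))
    (fun n y _ => (hasDerivAt_pow n y).const_mul _)
    (fun n y hy => ?_) (Metric.mem_ball_self (by positivity))
    (summable_glC_mul_pow hα1 hα2 (z := 0) (by simp)) (mem_ball_zero_iff.mpr hwr)
  rw [mem_ball_zero_iff] at hy
  have hyr : ‖y‖ ≤ r := hy.le
  show ‖(glCoeff α n : ℂ) * ((n : ℂ) * y ^ (n - 1))‖ ≤ 2 * ((n : ℝ) * r ^ (n - 1))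
  rw [norm_mul, norm_mul, norm_pow, Complex.norm_real, Real.norm_eq_abs,
    Complex.norm_natCast]
  have h1 : (n : ℝ) * ‖y‖ ^ (n - 1) ≤ (n : ℝ) * r ^ (n - 1) := by
    gcongr
  exact mul_le_mul (abs_glCoeff_le_two hα1 hα2 n) h1 (by positivity) (by norm_num)

lemma func_eq_glC (hα1 : 1 < α) (hα2 : α ≤ 2) {w : ℂ} (hw : ‖w‖ < 1) :
    (1 - w) * (∑' n : ℕ, (glCoeff α n : ℂ) * ((n : ℂ) * w ^ (n - 1)))
      = -(α : ℂ) * ∑' n : ℕ, (glCoeff α n : ℂ) * w ^ n := by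
  have S1 := summable_D hα1 hα2 hw
  have S2 := summable_D' hα1 hα2 hw
  have S3 := summable_glC_mul_pow hα1 hα2 hw.le
  have eq1 : (∑' n : ℕ, (glCoeff α n : ℂ) * ((n : ℂ) * w ^ (n - 1)))
      = ∑' n : ℕ, (glCoeff α n : ℂ) * (((n : ℂ) - α) * w ^ n) := by
    rw [Summable.tsum_eq_zero_add S1]
    simp only [Nat.cast_zero, zero_mul, mul_zero, zero_add, Nat.add_sub_cancel]
    apply tsum_congr
    intro b
    calc (glCoeff α (b+1) : ℂ) * (((b+1 : ℕ) : ℂ) * w ^ b)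
        = ((glCoeff α (b+1) : ℂ) * ((b+1 : ℕ) : ℂ)) * w ^ b := by ring
      _ = ((glCoeff α b : ℂ) * ((b : ℂ) - α)) * w ^ b := by rw [glCoeff_mul_succ_C]
      _ = (glCoeff α b : ℂ) * (((b : ℂ) - α) * w ^ b) := by ring
  have eq2 : ∑' n : ℕ, (glCoeff α n : ℂ) * (((n : ℂ) - α) * w ^ n)
      = (∑' n : ℕ, (glCoeff α n : ℂ) * ((n : ℂ) * w ^ n))
        - (α : ℂ) * ∑' n : ℕ, (glCoeff α n : ℂ) * w ^ n := by
    rw [← tsum_mul_left (a := (α : ℂ)), ← Summable.tsum_sub S2 (S3.mul_left _)]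
    apply tsum_congr
    intro n
    ring
  have eq3 : w * (∑' n : ℕ, (glCoeff α n : ℂ) * ((n : ℂ) * w ^ (n - 1)))
      = ∑' n : ℕ, (glCoeff α n : ℂ) * ((n : ℂ) * w ^ n) := by
    rw [← tsum_mul_left]
    apply tsum_congr
    intro n
    cases n with
    | zero => simp
    | succ m =>
        simp only [Nat.add_sub_cancel]
        rw [pow_succ]
        ring
  rw [sub_mul, one_mul, eq3, eq1, eq2]
  ring

lemma tsum_glC_interior (hα1 : 1 < α) (hα2 : α ≤ 2) {z : ℂ} (hz : ‖z‖ < 1) :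
    (∑' n : ℕ, (glCoeff α n : ℂ) * z ^ n) = (1 - z) ^ (α : ℂ) := by
  have hslit : ∀ w : ℂ, ‖w‖ < 1 → (1 - w) ∈ Complex.slitPlane := by
    intro w hw
    left
    simp only [Complex.sub_re, Complex.one_re]
    have h := Complex.abs_re_le_norm w
    have : w.re < 1 := lt_of_le_of_lt (le_trans (le_abs_self _) h) hw
    linarith
  have hne : ∀ w : ℂ, ‖w‖ < 1 → (1 - w) ≠ 0 :=
    fun w hw => Complex.slitPlane_ne_zero (hslit w hw)
  have hG : ∀ w ∈ Metric.ball (0:ℂ) 1,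
      HasDerivAt (fun w : ℂ =>
        (∑' n : ℕ, (glCoeff α n : ℂ) * w ^ n) * (1 - w) ^ (-(α : ℂ))) 0 w := by
    intro w hw
    rw [mem_ball_zero_iff] at hw
    have hpow : HasDerivAt (fun w : ℂ => (1 - w) ^ (-(α : ℂ)))
        (-(α : ℂ) * (1 - w) ^ (-(α : ℂ) - 1) * (-1)) w :=
      HasDerivAt.cpow_const ((hasDerivAt_id w).const_sub 1) (hslit w hw)
    have hmul := (hasDerivAt_glC_tsum hα1 hα2 hw).mul hpow
    have hzero : (∑' n : ℕ, (glCoeff α n : ℂ) * ((n : ℂ) * w ^ (n - 1)))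
          * (1 - w) ^ (-(α : ℂ))
        + (∑' n : ℕ, (glCoeff α n : ℂ) * w ^ n)
          * (-(α : ℂ) * (1 - w) ^ (-(α : ℂ) - 1) * (-1)) = 0 := by
      have hsplit : (1 - w) ^ (-(α : ℂ)) = (1 - w) ^ (-(α : ℂ) - 1) * (1 - w) := by
        conv_lhs => rw [show -(α : ℂ) = (-(α : ℂ) - 1) + 1 by ring]
        rw [Complex.cpow_add _ _ (hne w hw), Complex.cpow_one]
      rw [hsplit]
      linear_combination ((1 - w) ^ (-(α : ℂ) - 1)) * (func_eq_glC hα1 hα2 hw)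
    rw [← hzero]
    exact hmul
  have hconst : (∑' n : ℕ, (glCoeff α n : ℂ) * z ^ n) * (1 - z) ^ (-(α : ℂ))
      = (∑' n : ℕ, (glCoeff α n : ℂ) * (0:ℂ) ^ n) * (1 - (0:ℂ)) ^ (-(α : ℂ)) :=
    (convex_ball (0:ℂ) 1).is_const_of_fderivWithin_eq_zero
      (fun w hw => ((hG w hw).differentiableAt).differentiableWithinAt)
      (fun w hw => by
        rw [fderivWithin_of_isOpen Metric.isOpen_ball hw, (hG w hw).hasFDerivAt.fderiv]
        apply ContinuousLinearMap.ext
        intro x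
        simp)
      (mem_ball_zero_iff.mpr hz) (Metric.mem_ball_self one_pos)
  have hF0 : (∑' n : ℕ, (glCoeff α n : ℂ) * (0:ℂ) ^ n) = 1 := by
    rw [tsum_eq_single 0 (fun n hn => by simp [zero_pow hn])]
    simp [glCoeff_zero]
  rw [hF0, one_mul] at hconst
  have h10 : ((1:ℂ) - 0) ^ (-(α:ℂ)) = 1 := by
    rw [sub_zero, Complex.one_cpow]
  rw [h10] at hconst
  have hne' : (1 - z) ^ (α : ℂ) ≠ 0 := by
    rw [Ne, Complex.cpow_eq_zero_iff]
    push_neg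
    intro h
    exact absurd h (hne z hz)
  rw [Complex.cpow_neg] at hconst
  exact (mul_inv_eq_one₀ hne').mp hconst

lemma tsum_glC_boundary (hα1 : 1 < α) (hα2 : α ≤ 2) {w : ℂ} (hw : ‖w‖ = 1)
    (hw1 : 0 < (1 - w).re) :
    (∑' n : ℕ, (glCoeff α n : ℂ) * w ^ n) = (1 - w) ^ (α : ℂ) := by
  have Ssum := summable_glC_mul_pow hα1 hα2 (z := w) hw.le
  have hl := Ssum.hasSum.tendsto_sum_nat
  have habel := Complex.tendsto_tsum_powerSeries_nhdsWithin_lt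
    (f := fun n => (glCoeff α n : ℂ) * w ^ n) hl
  rw [Filter.tendsto_map'_iff] at habel
  have h1 : Tendsto (fun r : ℝ => 1 - (r : ℂ) * w) (𝓝[<] (1:ℝ)) (𝓝 (1 - w)) := by
    apply Tendsto.mono_left _ nhdsWithin_le_nhds
    have hc : Continuous fun r : ℝ => 1 - (r : ℂ) * w := by continuity
    simpa using hc.tendsto 1
  have hcont : Tendsto (fun r : ℝ => (1 - (r : ℂ) * w) ^ (α : ℂ)) (𝓝[<] (1:ℝ))
      (𝓝 ((1 - w) ^ (α : ℂ))) :=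
    (continuousAt_cpow_const (Or.inl hw1)).tendsto.comp h1
  have heq : (fun r : ℝ => ∑' n : ℕ, (glCoeff α n : ℂ) * w ^ n * (r : ℂ) ^ n)
      =ᶠ[𝓝[<] (1:ℝ)] fun r : ℝ => (1 - (r : ℂ) * w) ^ (α : ℂ) := by
    filter_upwards [Ioo_mem_nhdsLT_of_mem (show (1:ℝ) ∈ Set.Ioc (-1:ℝ) 1 by constructor <;> norm_num)]
      with r hr
    have hrw : ‖(r : ℂ) * w‖ < 1 := by
      rw [norm_mul, Complex.norm_real, hw, mul_one, Real.norm_eq_abs]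
      exact abs_lt.mpr ⟨hr.1, hr.2⟩
    have := tsum_glC_interior hα1 hα2 hrw
    rw [← this]
    apply tsum_congr
    intro n
    rw [mul_pow]
    ring
  have habel' : Tendsto (fun r : ℝ => (1 - (r : ℂ) * w) ^ (α : ℂ)) (𝓝[<] (1:ℝ)) (𝓝 (∑' n : ℕ, (glCoeff α n : ℂ) * w ^ n)) := by
    refine Tendsto.congr' heq ?_
    exact habel
  exact tendsto_nhds_unique habel' hcont

lemma summable_glC_cos (hα1 : 1 < α) (hα2 : α ≤ 2) (β : ℝ) :
    Summable (fun n : ℕ => glCoeff α n * Real.cos (((n : ℝ) - 1) * β)) := by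
  apply Summable.of_norm_bounded (summable_abs_glCoeff hα1 hα2)
  intro n
  rw [Real.norm_eq_abs, abs_mul]
  calc |glCoeff α n| * |Real.cos (((n : ℝ) - 1) * β)|
      ≤ |glCoeff α n| * 1 := by
        gcongr
        exact Real.abs_cos_le_one _
    _ = |glCoeff α n| := mul_one _

lemma tsum_glC_cos (hα1 : 1 < α) (hα2 : α ≤ 2) {β : ℝ} (hβ0 : 0 < β) (hβπ : β < Real.pi) :
    ∑' n : ℕ, glCoeff α n * Real.cos (((n : ℝ) - 1) * β)
      = (2 * Real.sin (β / 2)) ^ α * Real.cos (β + α / 2 * (Real.pi - β)) := by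
  set w : ℂ := Complex.exp ((β : ℂ) * Complex.I) with hwdef
  have hw : ‖w‖ = 1 := by
    rw [hwdef, Complex.norm_exp_ofReal_mul_I]
  have hpi := Real.pi_pos
  have hs : 0 < Real.sin (β / 2) := Real.sin_pos_of_pos_of_lt_pi (by linarith) (by linarith)
  have h2s : 0 < 2 * Real.sin (β / 2) := by linarith
  have hwre : w.re = Real.cos β := Complex.exp_ofReal_mul_I_re β
  have hwim : w.im = Real.sin β := Complex.exp_ofReal_mul_I_im β
  have hcosβ : Real.cos β = 1 - 2 * Real.sin (β / 2) ^ 2 := by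
    have h := Real.cos_two_mul (β / 2)
    have h2 := Real.sin_sq_add_cos_sq (β / 2)
    rw [show 2 * (β / 2) = β by ring] at h
    linarith
  have hsinβ : Real.sin β = 2 * Real.sin (β / 2) * Real.cos (β / 2) := by
    have h := Real.sin_two_mul (β / 2)
    rw [show 2 * (β / 2) = β by ring] at h
    linarith
  set u : ℂ := (Real.log (2 * Real.sin (β / 2)) : ℝ) + ((β - Real.pi) / 2 : ℝ) * Complex.I
    with hudef
  have hure : u.re = Real.log (2 * Real.sin (β / 2)) := by
    simp [hudef]
  have huim : u.im = (β - Real.pi) / 2 := by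
    simp [hudef]
  have key1 : 1 - w = Complex.exp u := by
    apply Complex.ext
    · rw [Complex.sub_re, Complex.one_re, hwre, Complex.exp_re, hure, huim,
        Real.exp_log h2s]
      have hc : Real.cos ((β - Real.pi) / 2) = Real.sin (β / 2) := by
        rw [show (β - Real.pi) / 2 = -(Real.pi / 2 - β / 2) by ring, Real.cos_neg,
          Real.cos_pi_div_two_sub]
      rw [hc, hcosβ]
      ring
    · rw [Complex.sub_im, Complex.one_im, hwim, Complex.exp_im, hure, huim,
        Real.exp_log h2s]
      have hc : Real.sin ((β - Real.pi) / 2) = -Real.cos (β / 2) := by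
        rw [show (β - Real.pi) / 2 = -(Real.pi / 2 - β / 2) by ring, Real.sin_neg,
          Real.sin_pi_div_two_sub]
      rw [hc, hsinβ]
      ring
  have hwne : (1 : ℂ) - w ≠ 0 := by
    rw [key1]; exact Complex.exp_ne_zero u
  have key2 : (1 - w) ^ (α : ℂ) = Complex.exp (u * (α : ℂ)) := by
    rw [key1, Complex.cpow_def_of_ne_zero (Complex.exp_ne_zero u),
      Complex.log_exp (by rw [huim]; linarith) (by rw [huim]; linarith)]
  have hw1 : 0 < ((1 : ℂ) - w).re := by
    rw [Complex.sub_re, Complex.one_re, hwre]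
    have : Real.cos β < Real.cos 0 := Real.cos_lt_cos_of_nonneg_of_le_pi le_rfl hβπ.le hβ0
    rw [Real.cos_zero] at this
    linarith
  have hbdry := tsum_glC_boundary hα1 hα2 hw hw1
  have hsum_c := summable_glC_mul_pow hα1 hα2 (z := w) hw.le
  have stepA : ∀ n : ℕ, glCoeff α n * Real.cos (((n : ℝ) - 1) * β)
      = (Complex.exp (-(β : ℂ) * Complex.I) * ((glCoeff α n : ℂ) * w ^ n)).re := by
    intro n
    have hexp : Complex.exp (-(β : ℂ) * Complex.I) * w ^ n
        = Complex.exp (((((n : ℝ) - 1) * β : ℝ) : ℂ) * Complex.I) := by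
      rw [hwdef, ← Complex.exp_nat_mul, ← Complex.exp_add]
      congr 1
      push_cast
      ring
    calc glCoeff α n * Real.cos (((n : ℝ) - 1) * β)
        = ((glCoeff α n : ℂ) * Complex.exp (((((n : ℝ) - 1) * β : ℝ) : ℂ) * Complex.I)).re := by
          rw [Complex.mul_re, Complex.ofReal_re, Complex.ofReal_im,
            Complex.exp_ofReal_mul_I_re]
          simp
      _ = (Complex.exp (-(β : ℂ) * Complex.I) * ((glCoeff α n : ℂ) * w ^ n)).re := by
          rw [show Complex.exp (-(β : ℂ) * Complex.I) * ((glCoeff α n : ℂ) * w ^ n)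
            = (glCoeff α n : ℂ) * (Complex.exp (-(β : ℂ) * Complex.I) * w ^ n) by ring, hexp]
  calc ∑' n : ℕ, glCoeff α n * Real.cos (((n : ℝ) - 1) * β)
      = ∑' n : ℕ, (Complex.exp (-(β : ℂ) * Complex.I) * ((glCoeff α n : ℂ) * w ^ n)).re :=
        tsum_congr stepA
    _ = (∑' n : ℕ, Complex.exp (-(β : ℂ) * Complex.I) * ((glCoeff α n : ℂ) * w ^ n)).re :=
        (Complex.re_tsum (hsum_c.mul_left _)).symm
    _ = (Complex.exp (-(β : ℂ) * Complex.I) * ∑' n : ℕ, (glCoeff α n : ℂ) * w ^ n).re := by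
        rw [tsum_mul_left]
    _ = (Complex.exp (u * (α : ℂ) + -(β : ℂ) * Complex.I)).re := by
        rw [hbdry, key2, ← Complex.exp_add, add_comm]
    _ = Real.exp ((u * (α : ℂ) + -(β : ℂ) * Complex.I).re)
          * Real.cos ((u * (α : ℂ) + -(β : ℂ) * Complex.I).im) := Complex.exp_re _
    _ = (2 * Real.sin (β / 2)) ^ α * Real.cos (β + α / 2 * (Real.pi - β)) := by
        have hre : (u * (α : ℂ) + -(β : ℂ) * Complex.I).re
            = Real.log (2 * Real.sin (β / 2)) * α := by
          simp [Complex.add_re, Complex.mul_re, hure, huim, Complex.ofReal_re,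
            Complex.ofReal_im, Complex.I_re, Complex.I_im]
        have him : (u * (α : ℂ) + -(β : ℂ) * Complex.I).im
            = (β - Real.pi) / 2 * α - β := by
          simp [Complex.add_im, Complex.mul_im, hure, huim, Complex.ofReal_re,
            Complex.ofReal_im, Complex.I_re, Complex.I_im]
          ring
        rw [hre, him, ← Real.rpow_def_of_pos h2s]
        congr 1
        rw [show (β - Real.pi) / 2 * α - β = -(β + α / 2 * (Real.pi - β)) by ring,
          Real.cos_neg]

lemma neumannExt_cos (N k : ℕ) (j : ℤ) :
    neumannExt N (fun i : Fin (N + 1) => Real.cos ((k : ℝ) * gridX N i)) j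
      = Real.cos ((k : ℝ) * (Real.pi * gridH N * ((j : ℝ) + 1 / 2))) := by
  have hgrid : gridH N * ((N : ℝ) + 1) = 1 := by
    unfold gridH
    field_simp
  have hbne : (2 * ((N : ℤ) + 1)) ≠ 0 := by positivity
  have hm0 : 0 ≤ j % (2 * ((N : ℤ) + 1)) := Int.emod_nonneg j hbne
  have hmlt : j % (2 * ((N : ℤ) + 1)) < 2 * ((N : ℤ) + 1) :=
    Int.emod_lt_of_pos j (by positivity)
  have hdiv := Int.mul_ediv_add_emod j (2 * ((N : ℤ) + 1))
  have hcastm : (((j % (2 * ((N : ℤ) + 1))).toNat : ℕ) : ℝ)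
      = ((j % (2 * ((N : ℤ) + 1)) : ℤ) : ℝ) := by
    have := Int.toNat_of_nonneg hm0
    exact_mod_cast congrArg (fun t : ℤ => (t : ℝ)) this
  have hper : Real.cos ((k : ℝ) * (Real.pi * gridH N * ((j : ℝ) + 1 / 2)))
      = Real.cos ((k : ℝ) * (Real.pi * gridH N
          * (((j % (2 * ((N : ℤ) + 1)) : ℤ) : ℝ) + 1 / 2))) := by
    have hj : (j : ℝ) = 2 * ((N : ℝ) + 1) * ((j / (2 * ((N : ℤ) + 1)) : ℤ) : ℝ)
        + ((j % (2 * ((N : ℤ) + 1)) : ℤ) : ℝ) := by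
      exact_mod_cast (congrArg (fun t : ℤ => (t : ℝ)) hdiv).symm
    rw [show (k : ℝ) * (Real.pi * gridH N * ((j : ℝ) + 1 / 2))
        = (k : ℝ) * (Real.pi * gridH N * (((j % (2 * ((N : ℤ) + 1)) : ℤ) : ℝ) + 1 / 2))
          + ((j / (2 * ((N : ℤ) + 1)) * k : ℤ) : ℝ) * (2 * Real.pi) from by
        rw [hj]
        push_cast
        linear_combination
          (2 * (k : ℝ) * ((j / (2 * ((N : ℤ) + 1)) : ℤ) : ℝ) * Real.pi) * hgrid]
    exact Real.cos_add_int_mul_two_pi _ _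
  rw [hper]
  unfold neumannExt
  split_ifs with hc
  · show Real.cos ((k : ℝ) * gridX N _) = _
    unfold gridX
    congr 2
    rw [hcastm]
  · show Real.cos ((k : ℝ) * gridX N _) = _
    unfold gridX
    have hle : (j % (2 * ((N : ℤ) + 1))).toNat ≤ 2 * N + 1 := by omega
    have hcast2 : ((2 * N + 1 - (j % (2 * ((N : ℤ) + 1))).toNat : ℕ) : ℝ)
        = 2 * (N : ℝ) + 1 - ((j % (2 * ((N : ℤ) + 1)) : ℤ) : ℝ) := by
      push_cast [hle]
      rw [hcastm]
    rw [show (((⟨2 * N + 1 - (j % (2 * ((N:ℤ) + 1))).toNat, by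
        have h2 : j % (2 * ((N:ℤ) + 1)) < 2 * ((N:ℤ) + 1) := Int.emod_lt_of_pos j (by positivity)
        omega⟩ : Fin (N + 1)) : ℕ) : ℝ) = 2 * (N : ℝ) + 1 - ((j % (2 * ((N : ℤ) + 1)) : ℤ) : ℝ)
      from hcast2]
    rw [show (k : ℝ) * (Real.pi * gridH N
          * ((2 * (N : ℝ) + 1 - ((j % (2 * ((N : ℤ) + 1)) : ℤ) : ℝ)) + 1 / 2))
        = -((k : ℝ) * (Real.pi * gridH N * (((j % (2 * ((N : ℤ) + 1)) : ℤ) : ℝ) + 1 / 2)))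
          + ((k : ℕ) : ℤ) * (2 * Real.pi) from by
      push_cast
      linear_combination (2 * (k : ℝ) * Real.pi) * hgrid]
    rw [Real.cos_add_int_mul_two_pi, Real.cos_neg]

end AuxLemmas

/-- For `k = 0,…,N`, the vector `v^k = (cos(k x_0), …, cos(k x_N))` is an
eigenvector of `A_{α,h}` with eigenvalue
`λ_k = -(σ/cos(απ/2)) (2/h)^α (sin(kπh/2))^α cos(kπh + (α/2)(π - kπh))`. -/
theorem Amat_eigenvector (α σ : ℝ) (hα : α ∈ Set.Ioc (1 : ℝ) 2) (hσ : 0 < σ)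
    (N : ℕ) (hN : 1 ≤ N) (k : ℕ) (hk : k ≤ N) :
    ∀ j : Fin (N + 1),
      Amul α σ N (fun i => Real.cos ((k : ℝ) * gridX N i)) j =
        eigVal α σ N k * Real.cos ((k : ℝ) * gridX N j) := by
  obtain ⟨hα1, hα2⟩ := hα
  intro j
  have hpi := Real.pi_pos
  have hh0 : 0 < gridH N := by unfold gridH; positivity
  have hterm : ∀ n : ℕ,
      neumannExt N (fun i => Real.cos ((k : ℝ) * gridX N i)) ((j : ℤ) + 1 - (n : ℤ))
        + neumannExt N (fun i => Real.cos ((k : ℝ) * gridX N i)) ((j : ℤ) - 1 + (n : ℤ))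
      = 2 * Real.cos ((k : ℝ) * gridX N j)
          * Real.cos (((n : ℝ) - 1) * ((k : ℝ) * Real.pi * gridH N)) := by
    intro n
    rw [neumannExt_cos, neumannExt_cos]
    rw [show (k : ℝ) * (Real.pi * gridH N * ((((j : ℤ) + 1 - (n : ℤ) : ℤ) : ℝ) + 1 / 2))
        = (k : ℝ) * gridX N j
          + (1 - (n : ℝ)) * ((k : ℝ) * Real.pi * gridH N) from by
      unfold gridX; push_cast; ring]
    rw [show (k : ℝ) * (Real.pi * gridH N * ((((j : ℤ) - 1 + (n : ℤ) : ℤ) : ℝ) + 1 / 2))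
        = (k : ℝ) * gridX N j
          - (1 - (n : ℝ)) * ((k : ℝ) * Real.pi * gridH N) from by
      unfold gridX; push_cast; ring]
    rw [Real.cos_add, Real.cos_sub,
      show ((n : ℝ) - 1) * ((k : ℝ) * Real.pi * gridH N)
        = -((1 - (n : ℝ)) * ((k : ℝ) * Real.pi * gridH N)) by ring, Real.cos_neg]
    ring
  unfold Amul
  have h1 : (∑' n : ℕ, glCoeff α n *
      (neumannExt N (fun i => Real.cos ((k : ℝ) * gridX N i)) ((j : ℤ) + 1 - (n : ℤ))
        + neumannExt N (fun i => Real.cos ((k : ℝ) * gridX N i)) ((j : ℤ) - 1 + (n : ℤ))))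
      = 2 * Real.cos ((k : ℝ) * gridX N j)
        * ∑' n : ℕ, glCoeff α n
            * Real.cos (((n : ℝ) - 1) * ((k : ℝ) * Real.pi * gridH N)) := by
    rw [← tsum_mul_left]
    apply tsum_congr
    intro n
    rw [hterm n]
    ring
  rw [h1]
  rcases Nat.eq_zero_or_pos k with hk0 | hk1
  · subst hk0
    have hS : (∑' n : ℕ, glCoeff α n
        * Real.cos (((n : ℝ) - 1) * (((0:ℕ) : ℝ) * Real.pi * gridH N))) = 0 := by
      have he : (fun n : ℕ => glCoeff α n
          * Real.cos (((n : ℝ) - 1) * (((0:ℕ) : ℝ) * Real.pi * gridH N)))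
          = fun n : ℕ => glCoeff α n := by
        funext n
        simp
      rw [he]
      exact (hasSum_glCoeff_zero hα1 hα2).tsum_eq
    rw [hS]
    unfold eigVal
    simp [Real.zero_rpow (by linarith : α ≠ 0)]
  · set β : ℝ := (k : ℝ) * Real.pi * gridH N with hβ
    have hk1' : (1 : ℝ) ≤ (k : ℝ) := by exact_mod_cast hk1
    have hβ0 : 0 < β := by
      rw [hβ]; positivity
    have hβπ : β < Real.pi := by
      rw [hβ]
      unfold gridH
      rw [div_eq_mul_inv, one_mul]
      have hkN : (k : ℝ) < (N : ℝ) + 1 := by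
        have : (k : ℝ) ≤ (N : ℝ) := by exact_mod_cast hk
        linarith
      calc (k : ℝ) * Real.pi * ((N : ℝ) + 1)⁻¹
          < ((N : ℝ) + 1) * Real.pi * ((N : ℝ) + 1)⁻¹ := by
            apply mul_lt_mul_of_pos_right (mul_lt_mul_of_pos_right hkN hpi)
            positivity
        _ = Real.pi := by
            field_simp
    rw [tsum_glC_cos hα1 hα2 hβ0 hβπ]
    unfold eigVal
    have hsn : 0 ≤ Real.sin (β / 2) :=
      Real.sin_nonneg_of_nonneg_of_le_pi (by linarith) (by linarith)
    have hsplit1 : (2 * Real.sin (β / 2)) ^ α = 2 ^ α * Real.sin (β / 2) ^ α :=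
      Real.mul_rpow (by norm_num) hsn
    have hsplit2 : (2 / gridH N) ^ α = 2 ^ α / gridH N ^ α :=
      Real.div_rpow (by norm_num) hh0.le α
    have hcneg : Real.cos (α * Real.pi / 2) < 0 := by
      apply Real.cos_neg_of_pi_div_two_lt_of_lt
      · nlinarith
      · nlinarith
    have hcne : Real.cos (α * Real.pi / 2) ≠ 0 := ne_of_lt hcneg
    have hpowh : (0 : ℝ) < gridH N ^ α := Real.rpow_pos_of_pos hh0 α
    have h2pow : (0 : ℝ) < (2 : ℝ) ^ α := Real.rpow_pos_of_pos (by norm_num) α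
    rw [show Real.sin ((k : ℝ) * Real.pi * gridH N / 2) = Real.sin (β / 2) from by rw [hβ]]
    rw [show (k : ℝ) * Real.pi * gridH N + α / 2 * (Real.pi - (k : ℝ) * Real.pi * gridH N)
        = β + α / 2 * (Real.pi - β) from by rw [hβ]]
    rw [hsplit1, hsplit2]
    field_simp
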